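/- Let C be a ℤ_p-chain complex each of whose chain groups is a finitely generated free ℤ[ℤ/pℤ]-module (generator of ℤ/pℤ acting as t). Give Hom(C^s, ℤ) the coboundary dual to the restricted boundary of C^s. Then: (i) every functional in Hom(C^s_n, ℤ) is the restriction to C^s_n of some cochain ψ ∈ C^n; (ii) the map γ_s : C*_s → Hom(C^s, ℤ) given by γ_s(dψ) = ψ|_{C^s} for ψ ∈ C* is well-defined (independent of the choice of ψ) and is a chain homomorphism; (iii) the map ρ_s : Hom(C^s, ℤ) → C*_s given by ρ_s(ψ|_{C^s}) = dψ is well-defined and a chain homomorphism; and (iv) γ_s and ρ_s induce mutually inverse isomorphisms between H^n_s(C) and the n-th cohomology of Hom(C^s, ℤ), for every n. -/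

import Mathlib

/-- A `ℤ_p`-chain complex (in nonnegative degrees) whose degree-`n` chain group is the
finitely generated free ℤ-module with basis `{t^k σ : σ ∈ F n, 0 ≤ k ≤ p−1}`, i.e. the
free ℤ-module on `F n × ZMod p`; the action of `t` cyclically permutes the basis, and
commutes with the boundary. Equivalently, each chain group is a finitely generated free
`ℤ[ℤ/pℤ]`-module with the generator of `ℤ/pℤ` acting as `t`. -/
structure ZpFreeComplex (p : ℕ) where
  F : ℕ → Type
  fin : ∀ n, Fintype (F n)
  bd : ∀ n, ((F (n + 1) × ZMod p → ℤ) →+ (F n × ZMod p → ℤ))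
  bd_bd : ∀ n x, bd n (bd (n + 1) x) = 0
  bd_t : ∀ n (c : F (n + 1) × ZMod p → ℤ),
    bd n (fun z => c (z.1, z.2 - 1)) = fun z => bd n c (z.1, z.2 - 1)

namespace ZpFreeComplex

variable {p : ℕ} (X : ZpFreeComplex p)

/-- degree-`n` chains -/
abbrev Ch (n : ℕ) := X.F n × ZMod p → ℤ

/-- degree-`n` integral cochains -/
abbrev Co (n : ℕ) := (X.F n × ZMod p → ℤ) →+ ℤ

/-- the chain map `t^k` -/
def tCh (n k : ℕ) : X.Ch n →+ X.Ch n where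
  toFun c := fun z => c (z.1, z.2 - (k : ZMod p))
  map_zero' := rfl
  map_add' _ _ := rfl

/-- `s = 1 + t + ⋯ + t^{p−1}` on chains -/
def sCh (n : ℕ) : X.Ch n →+ X.Ch n := ∑ k ∈ Finset.range p, X.tCh n k

/-- `d = 1 − t` on chains -/
def dCh (n : ℕ) : X.Ch n →+ X.Ch n := AddMonoidHom.id _ - X.tCh n 1

/-- the cochain map `t^k`, `φ ↦ φ ∘ t^k` -/
def tCo (n k : ℕ) : X.Co n →+ X.Co n where
  toFun φ := φ.comp (X.tCh n k)
  map_zero' := by ext x; simp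
  map_add' _ _ := by ext x; simp

/-- `s = 1 + t + ⋯ + t^{p−1}` on cochains -/
def sCo (n : ℕ) : X.Co n →+ X.Co n where
  toFun φ := φ.comp (X.sCh n)
  map_zero' := by ext x; simp
  map_add' _ _ := by ext x; simp

/-- `d = 1 − t` on cochains -/
def dCo (n : ℕ) : X.Co n →+ X.Co n where
  toFun φ := φ.comp (X.dCh n)
  map_zero' := by ext x; simp
  map_add' _ _ := by ext x; simp

/-- the coboundary `δφ = φ ∘ ∂` -/
def cb (n : ℕ) : X.Co n →+ X.Co (n + 1) where
  toFun φ := φ.comp (X.bd n)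
  map_zero' := by ext x; simp
  map_add' _ _ := by ext x; simp

/-- the boundary out of degree `n` (the zero map in degree 0). -/
def bdFrom : ∀ n : ℕ, (X.Ch n →+ X.Ch (n - 1))
  | 0 => 0
  | (j + 1) => X.bd j

lemma tCh_one (n : ℕ) (c : X.Ch n) : X.tCh n 1 c = fun z => c (z.1, z.2 - 1) := by
  funext z
  simp [tCh]

lemma tCh_succ (n k : ℕ) (c : X.Ch n) :
    X.tCh n (k + 1) c = X.tCh n 1 (X.tCh n k c) := by
  funext z
  show c (z.1, z.2 - ((k + 1 : ℕ) : ZMod p)) = c (z.1, z.2 - ((1 : ℕ) : ZMod p) - ((k : ℕ) : ZMod p))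
  have h2 : z.2 - ((k + 1 : ℕ) : ZMod p) = z.2 - ((1 : ℕ) : ZMod p) - ((k : ℕ) : ZMod p) := by
    push_cast
    ring
  rw [h2]

lemma tCh_zero (n : ℕ) (c : X.Ch n) : X.tCh n 0 c = c := by
  funext z
  simp [tCh]

lemma bd_tCh (n k : ℕ) (c : X.Ch (n + 1)) :
    X.bd n (X.tCh (n + 1) k c) = X.tCh n k (X.bd n c) := by
  induction k with
  | zero => rw [tCh_zero, tCh_zero]
  | succ k ih =>
      rw [X.tCh_succ (n + 1) k c, X.tCh_succ n k (X.bd n c)]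
      rw [X.tCh_one (n + 1) (X.tCh (n + 1) k c)]
      rw [X.bd_t n (X.tCh (n + 1) k c)]
      rw [ih]
      rw [← X.tCh_one n (X.tCh n k (X.bd n c))]

lemma bd_sCh (n : ℕ) (c : X.Ch (n + 1)) :
    X.bd n (X.sCh (n + 1) c) = X.sCh n (X.bd n c) := by
  simp only [sCh, AddMonoidHom.finset_sum_apply, map_sum, bd_tCh]

lemma bd_dCh (n : ℕ) (c : X.Ch (n + 1)) :
    X.bd n (X.dCh (n + 1) c) = X.dCh n (X.bd n c) := by
  simp only [dCh, AddMonoidHom.sub_apply, AddMonoidHom.id_apply, map_sub, bd_tCh]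

end ZpFreeComplex

namespace ZpFreeComplex

variable {p : ℕ} (X : ZpFreeComplex p)

/-- cocycles of the `d`-cochain complex `C*_d = ker d ⊆ C*` -/
def dcocycles (n : ℕ) : AddSubgroup (X.Co n) := (X.dCo n).ker ⊓ (X.cb n).ker

/-- coboundaries of the `d`-cochain complex -/
def dcobds : ∀ n : ℕ, AddSubgroup (X.Co n)
  | 0 => ⊥
  | (j + 1) => AddSubgroup.map (X.cb j) ((X.dCo j).ker)

/-- the `d`-cohomology `H^n_d` -/
abbrev Hd (n : ℕ) := X.dcocycles n ⧸ (X.dcobds n).addSubgroupOf (X.dcocycles n)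

/-- the `d`-cohomology class `[φ]_d` of a cocycle of `C*_d` -/
def clsd (n : ℕ) (φ : X.Co n) (h : φ ∈ X.dcocycles n) : X.Hd n :=
  QuotientAddGroup.mk ⟨φ, h⟩

/-- cocycles of the `s`-cochain complex `C*_s = ker s ⊆ C*` -/
def scocycles (n : ℕ) : AddSubgroup (X.Co n) := (X.sCo n).ker ⊓ (X.cb n).ker

/-- coboundaries of the `s`-cochain complex -/
def scobds : ∀ n : ℕ, AddSubgroup (X.Co n)
  | 0 => ⊥
  | (j + 1) => AddSubgroup.map (X.cb j) ((X.sCo j).ker)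

/-- the `s`-cohomology `H^n_s` -/
abbrev Hs (n : ℕ) := X.scocycles n ⧸ (X.scobds n).addSubgroupOf (X.scocycles n)

/-- the `s`-cohomology class `[φ]_s` of a cocycle of `C*_s` -/
def clss (n : ℕ) (φ : X.Co n) (h : φ ∈ X.scocycles n) : X.Hs n :=
  QuotientAddGroup.mk ⟨φ, h⟩

/-- the boundary of the `d`-chain complex `C^d = ker d ⊆ C`, i.e. the restriction
of the boundary of `C`. -/
def bdD (n : ℕ) : ↥((X.dCh (n + 1)).ker) →+ ↥((X.dCh n).ker) :=
  AddMonoidHom.codRestrict ((X.bd n).comp (X.dCh (n + 1)).ker.subtype) ((X.dCh n).ker)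
    (fun x => by
      have hx : X.dCh (n + 1) (x : X.Ch (n + 1)) = 0 := x.2
      simp only [AddMonoidHom.mem_ker, AddMonoidHom.coe_comp, AddSubgroup.coe_subtype,
        Function.comp_apply]
      rw [← bd_dCh, hx, map_zero])

/-- the boundary of the `s`-chain complex `C^s = ker s ⊆ C`, i.e. the restriction
of the boundary of `C`. -/
def bdS (n : ℕ) : ↥((X.sCh (n + 1)).ker) →+ ↥((X.sCh n).ker) :=
  AddMonoidHom.codRestrict ((X.bd n).comp (X.sCh (n + 1)).ker.subtype) ((X.sCh n).ker)
    (fun x => by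
      have hx : X.sCh (n + 1) (x : X.Ch (n + 1)) = 0 := x.2
      simp only [AddMonoidHom.mem_ker, AddMonoidHom.coe_comp, AddSubgroup.coe_subtype,
        Function.comp_apply]
      rw [← bd_sCh, hx, map_zero])

lemma cb_dCo (n : ℕ) (φ : X.Co n) :
    X.cb n (X.dCo n φ) = X.dCo (n + 1) (X.cb n φ) := by
  ext x
  show (X.dCo n φ) (X.bd n x) = (X.cb n φ) (X.dCh (n + 1) x)
  show φ (X.dCh n (X.bd n x)) = φ (X.bd n (X.dCh (n + 1) x))
  rw [bd_dCh]

lemma cb_sCo (n : ℕ) (φ : X.Co n) :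
    X.cb n (X.sCo n φ) = X.sCo (n + 1) (X.cb n φ) := by
  ext x
  show φ (X.sCh n (X.bd n x)) = φ (X.bd n (X.sCh (n + 1) x))
  rw [bd_sCh]

/-- the coboundary of `C*_d`, i.e. the restriction of the coboundary of `C*`. -/
def cbD (n : ℕ) : ↥((X.dCo n).ker) →+ ↥((X.dCo (n + 1)).ker) :=
  AddMonoidHom.codRestrict ((X.cb n).comp (X.dCo n).ker.subtype) ((X.dCo (n + 1)).ker)
    (fun φ => by
      have hφ : X.dCo n (φ : X.Co n) = 0 := φ.2
      simp only [AddMonoidHom.mem_ker, AddMonoidHom.coe_comp, AddSubgroup.coe_subtype,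
        Function.comp_apply]
      rw [← cb_dCo, hφ, map_zero])

end ZpFreeComplex

namespace ZpFreeComplex

variable {p : ℕ} (X : ZpFreeComplex p)

/-- cochains of the complex `Hom(C^s, ℤ)` -/
abbrev Co' (n : ℕ) := ↥((X.sCh n).ker) →+ ℤ

/-- the coboundary of `Hom(C^s, ℤ)`, dual to the restricted boundary of `C^s`. -/
def cb' (n : ℕ) : X.Co' n →+ X.Co' (n + 1) where
  toFun f := f.comp (X.bdS n)
  map_zero' := by ext x; simp
  map_add' _ _ := by ext x; simp

def cocycles' (n : ℕ) : AddSubgroup (X.Co' n) := (X.cb' n).ker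

def cobds' : ∀ n : ℕ, AddSubgroup (X.Co' n)
  | 0 => ⊥
  | (j + 1) => (X.cb' j).range

/-- the `n`-th cohomology of `Hom(C^s, ℤ)` -/
abbrev H' (n : ℕ) := X.cocycles' n ⧸ (X.cobds' n).addSubgroupOf (X.cocycles' n)

end ZpFreeComplex

namespace ZpFreeComplex

variable {p : ℕ} (X : ZpFreeComplex p)

lemma sum_range_cast [NeZero p] (g : ZMod p → ℤ) :
    ∑ k ∈ Finset.range p, g k = ∑ x : ZMod p, g x := by
  apply Finset.sum_nbij' (fun k => ((k : ℕ) : ZMod p)) (fun x => x.val)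
  · intro a _; exact Finset.mem_univ _
  · intro x _; simpa using ZMod.val_lt x
  · intro a ha; simp at ha; exact ZMod.val_cast_of_lt ha
  · intro x _; exact ZMod.natCast_rightInverse x
  · intro a _; rfl

lemma sCh_apply (n : ℕ) (c : X.Ch n) (z : X.F n × ZMod p) :
    X.sCh n c z = ∑ k ∈ Finset.range p, c (z.1, z.2 - (k : ZMod p)) := by
  simp [sCh, tCh]

lemma sCh_apply' [NeZero p] (n : ℕ) (c : X.Ch n) (z : X.F n × ZMod p) :
    X.sCh n c z = ∑ x : ZMod p, c (z.1, x) := by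
  rw [X.sCh_apply, sum_range_cast (fun x => c (z.1, z.2 - x))]
  exact Fintype.sum_equiv (Equiv.subLeft z.2) _ _ (fun x => rfl)

lemma dCh_apply (n : ℕ) (c : X.Ch n) (z : X.F n × ZMod p) :
    X.dCh n c z = c z - c (z.1, z.2 - 1) := by
  simp [dCh, tCh]

lemma mem_sker [NeZero p] {n : ℕ} {c : X.Ch n} :
    c ∈ (X.sCh n).ker ↔ ∀ σ, ∑ x : ZMod p, c (σ, x) = 0 := by
  constructor
  · intro h σ
    have := congrFun (AddMonoidHom.mem_ker.1 h) (σ, 0)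
    rwa [X.sCh_apply'] at this
  · intro h
    rw [AddMonoidHom.mem_ker]
    funext z
    rw [X.sCh_apply']
    exact h z.1

end ZpFreeComplex
namespace ZpFreeComplex

variable {p : ℕ} (X : ZpFreeComplex p)

/-- `h b (σ, j) = ∑_{i ≤ j.val} b (σ, i)`, a contracting homotopy datum. -/
def hmap (n : ℕ) : X.Ch n →+ X.Ch n where
  toFun b := fun z => ∑ i ∈ Finset.range (z.2.val + 1), b (z.1, (i : ZMod p))
  map_zero' := by funext z; simp
  map_add' a b := by funext z; simp [Finset.sum_add_distrib]

lemma hmap_apply (n : ℕ) (b : X.Ch n) (z : X.F n × ZMod p) :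
    X.hmap n b z = ∑ i ∈ Finset.range (z.2.val + 1), b (z.1, (i : ZMod p)) := rfl

lemma val_neg_one' (hp1 : 1 < p) : (-1 : ZMod p).val = p - 1 := by
  obtain ⟨m, rfl⟩ : ∃ m, p = m + 1 := ⟨p - 1, by omega⟩
  exact ZMod.val_neg_one m

/-- `d ∘ h = id` on `ker s`. -/
lemma dCh_hmap [NeZero p] (hp1 : 1 < p) {n : ℕ} {b : X.Ch n}
    (hb : b ∈ (X.sCh n).ker) : X.dCh n (X.hmap n b) = b := by
  funext z
  obtain ⟨σ, j⟩ := z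
  rw [X.dCh_apply, X.hmap_apply, X.hmap_apply]
  simp only
  by_cases hj : j = 0
  · subst hj
    rw [ZMod.val_zero, zero_sub, val_neg_one' hp1]
    have hsum : ∑ i ∈ Finset.range (p - 1 + 1), b (σ, (i : ZMod p)) = 0 := by
      have h1 : p - 1 + 1 = p := by omega
      rw [h1, sum_range_cast (fun x => b (σ, x))]
      exact (X.mem_sker.1 hb) σ
    rw [hsum]
    simp
  · have hval : j.val ≠ 0 := fun h => hj ((ZMod.val_eq_zero j).1 h)
    obtain ⟨m, hm⟩ : ∃ m, j.val = m + 1 := ⟨j.val - 1, by omega⟩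
    have hmlt : m + 1 < p := hm ▸ ZMod.val_lt j
    have hj1 : (j - 1).val = m := by
      have h1 : j - 1 = ((m : ℕ) : ZMod p) := by
        have h2 : j = ((m + 1 : ℕ) : ZMod p) := by rw [← hm]; exact (ZMod.natCast_rightInverse j).symm
        rw [h2]; push_cast; ring
      rw [h1, ZMod.val_cast_of_lt (by omega)]
    rw [hm, hj1, Finset.sum_range_succ]
    have h3 : ((m + 1 : ℕ) : ZMod p) = j := by rw [← hm]; exact ZMod.natCast_rightInverse j
    rw [h3]
    ring

end ZpFreeComplex
namespace ZpFreeComplex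

variable {p : ℕ} (X : ZpFreeComplex p)

/-- Telescoping: `c - h (d c)` is the constant-in-`j` function `(σ, j) ↦ c (σ, -1)`. -/
lemma sub_hmap_dCh [NeZero p] (n : ℕ) (c : X.Ch n) (z : X.F n × ZMod p) :
    c z - X.hmap n (X.dCh n c) z = c (z.1, -1) := by
  obtain ⟨σ, j⟩ := z
  rw [X.hmap_apply]
  have hterm : ∀ i : ℕ, X.dCh n c (σ, (i : ZMod p)) =
      c (σ, ((i + 1 : ℕ) : ZMod p) - 1) - c (σ, ((i : ℕ) : ZMod p) - 1) := by
    intro i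
    rw [X.dCh_apply]
    congr 2
    push_cast
    ring
  simp only [hterm]
  rw [Finset.sum_range_sub (fun i => c (σ, ((i : ℕ) : ZMod p) - 1))]
  simp only [Nat.cast_zero, zero_sub]
  have hv : ((j.val + 1 : ℕ) : ZMod p) - 1 = j := by
    push_cast
    rw [ZMod.natCast_rightInverse j]
    ring
  rw [hv]
  ring

/-- `s ∘ d = 0` on chains: the image of `d` lies in `ker s`. -/
lemma dCh_mem_sker [NeZero p] (n : ℕ) (c : X.Ch n) : X.dCh n c ∈ (X.sCh n).ker := by
  rw [X.mem_sker]
  intro σ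
  have : ∀ x : ZMod p, X.dCh n c (σ, x) = c (σ, x) - c (σ, x - 1) := fun x => X.dCh_apply n c (σ, x)
  simp only [this, Finset.sum_sub_distrib]
  rw [sub_eq_zero]
  exact (Fintype.sum_equiv (Equiv.subRight (1 : ZMod p)) _ _ (fun x => rfl)).symm

/-- `d ∘ s = 0` on chains. -/
lemma dCh_sCh [NeZero p] (n : ℕ) (c : X.Ch n) : X.dCh n (X.sCh n c) = 0 := by
  funext z
  rw [X.dCh_apply]
  show X.sCh n c (z.1, z.2) - _ = _
  rw [X.sCh_apply', X.sCh_apply']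
  simp

/-- a cochain killed by `s` (i.e. `α ∘ s = 0`) kills `ker d`. -/
lemma sker_co_kills [NeZero p] {n : ℕ} {α : X.Co n} (hα : α ∈ (X.sCo n).ker)
    {u : X.Ch n} (hu : X.dCh n u = 0) : α u = 0 := by
  -- u is constant in the second coordinate
  have hstep : ∀ σ (x : ZMod p), u (σ, x) = u (σ, x - 1) := by
    intro σ x
    have := congrFun hu (σ, x)
    rw [X.dCh_apply] at this
    have h0 : u (σ, x) - u (σ, x - 1) = 0 := this
    linarith
  have hconst : ∀ σ (x : ZMod p), u (σ, x) = u (σ, 0) := by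
    intro σ x
    have hnat : ∀ k : ℕ, u (σ, ((k : ℕ) : ZMod p)) = u (σ, 0) := by
      intro k
      induction k with
      | zero => norm_num
      | succ k ih =>
          have := hstep σ ((k + 1 : ℕ) : ZMod p)
          rw [this, ← ih]
          congr 2
          push_cast
          ring
    have := hnat x.val
    rwa [ZMod.natCast_rightInverse x] at this
  -- u = s u' for u' supported on second coordinate 0
  set u' : X.Ch n := fun z => if z.2 = 0 then u (z.1, 0) else 0 with hu'
  have hsu : X.sCh n u' = u := by
    funext z
    rw [X.sCh_apply']
    rw [hconst z.1 z.2]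
    simp [hu']
  have : α u = (X.sCo n α) u' := by
    rw [← hsu]; rfl
  rw [this, AddMonoidHom.mem_ker.1 hα]
  rfl

/-- retraction of chains onto `ker s`. -/
def rmap [NeZero p] (n : ℕ) : X.Ch n →+ X.Ch n where
  toFun c := fun z => c z - if z.2 = 0 then ∑ x : ZMod p, c (z.1, x) else 0
  map_zero' := by funext z; simp
  map_add' a b := by
    funext z
    simp only [Pi.add_apply, Finset.sum_add_distrib]
    by_cases hz : z.2 = 0 <;> simp [hz] <;> ring

lemma rmap_mem [NeZero p] (n : ℕ) (c : X.Ch n) : X.rmap n c ∈ (X.sCh n).ker := by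
  rw [X.mem_sker]
  intro σ
  show ∑ x : ZMod p, (c (σ, x) - if x = 0 then ∑ y : ZMod p, c (σ, y) else 0) = 0
  rw [Finset.sum_sub_distrib, Finset.sum_ite_eq' Finset.univ (0 : ZMod p)
    (fun _ => ∑ y : ZMod p, c (σ, y))]
  simp

lemma rmap_of_mem [NeZero p] {n : ℕ} {c : X.Ch n} (hc : c ∈ (X.sCh n).ker) :
    X.rmap n c = c := by
  funext z
  show c z - _ = c z
  rw [(X.mem_sker.1 hc) z.1]
  simp

end ZpFreeComplex
namespace ZpFreeComplex

variable {p : ℕ} (X : ZpFreeComplex p)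

/-- the retraction `r`, corestricted to `ker s`. -/
def rres [NeZero p] (n : ℕ) : X.Ch n →+ ↥((X.sCh n).ker) :=
  AddMonoidHom.codRestrict (X.rmap n) ((X.sCh n).ker) (X.rmap_mem n)

lemma rres_of_mem [NeZero p] {n : ℕ} {c : X.Ch n} (hc : c ∈ (X.sCh n).ker) :
    X.rres n c = ⟨c, hc⟩ := Subtype.ext (X.rmap_of_mem hc)

/-- the map `γ_s`: on a cochain `α = dψ` killed by `s`, it is restriction of `ψ` to
`ker s`; concretely it is `α ∘ h` restricted to `ker s`. -/
def gam (n : ℕ) : ↥((X.sCo n).ker) →+ X.Co' n where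
  toFun α := ((α : X.Co n).comp (X.hmap n)).comp ((X.sCh n).ker).subtype
  map_zero' := by ext x; rfl
  map_add' a b := by ext x; rfl

lemma gam_apply (n : ℕ) (α : ↥((X.sCo n).ker)) (x : ↥((X.sCh n).ker)) :
    X.gam n α x = (α : X.Co n) (X.hmap n (x : X.Ch n)) := rfl

/-- extension of a functional on `ker s` to all chains, via the retraction `r`. -/
def psiOf [NeZero p] (n : ℕ) (f : X.Co' n) : X.Co n := f.comp (X.rres n)

lemma dCo_mem_sker [NeZero p] (n : ℕ) (ψ : X.Co n) : X.dCo n ψ ∈ (X.sCo n).ker := by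
  rw [AddMonoidHom.mem_ker]
  ext c
  show ψ (X.dCh n (X.sCh n c)) = 0
  rw [X.dCh_sCh]
  exact map_zero ψ

/-- the map `ρ_s`: `ρ_s (ψ|_{ker s}) = dψ`; concretely `f ↦ d (f ∘ r)`. -/
def rho [NeZero p] (n : ℕ) : X.Co' n →+ ↥((X.sCo n).ker) where
  toFun f := ⟨X.dCo n (X.psiOf n f), X.dCo_mem_sker n _⟩
  map_zero' := by
    apply Subtype.ext
    show X.dCo n (X.psiOf n 0) = 0
    have : X.psiOf n (0 : X.Co' n) = 0 := by ext c; rfl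
    rw [this, map_zero]
  map_add' a b := by
    apply Subtype.ext
    show X.dCo n (X.psiOf n (a + b)) = X.dCo n (X.psiOf n a) + X.dCo n (X.psiOf n b)
    have : X.psiOf n (a + b) = X.psiOf n a + X.psiOf n b := by ext c; rfl
    rw [this, map_add]

lemma rho_coe [NeZero p] (n : ℕ) (f : X.Co' n) :
    (X.rho n f : X.Co n) = X.dCo n (X.psiOf n f) := rfl

/-- `γ_s ∘ ρ_s = id`. -/
lemma gam_rho [NeZero p] (hp1 : 1 < p) (n : ℕ) (f : X.Co' n) :
    X.gam n (X.rho n f) = f := by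
  ext x
  rw [X.gam_apply, X.rho_coe]
  show X.psiOf n f (X.dCh n (X.hmap n (x : X.Ch n))) = f x
  rw [X.dCh_hmap hp1 x.2]
  show f (X.rres n (x : X.Ch n)) = f x
  rw [X.rres_of_mem x.2]

/-- `ρ_s ∘ γ_s = id`. -/
lemma rho_gam [NeZero p] (hp1 : 1 < p) (n : ℕ) (α : ↥((X.sCo n).ker)) :
    X.rho n (X.gam n α) = α := by
  apply Subtype.ext
  rw [X.rho_coe]
  ext c
  show X.psiOf n (X.gam n α) (X.dCh n c) = (α : X.Co n) c
  show X.gam n α (X.rres n (X.dCh n c)) = (α : X.Co n) c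
  rw [X.rres_of_mem (X.dCh_mem_sker n c), X.gam_apply]
  -- `α (h (d c)) = α c` since `c - h (d c)` is killed by `d`, hence by `α`
  have hdiff : X.dCh n (c - X.hmap n (X.dCh n c)) = 0 := by
    have h1 : c - X.hmap n (X.dCh n c) = fun z => c (z.1, -1) := by
      funext z
      exact X.sub_hmap_dCh n c z
    rw [h1]
    funext z
    rw [X.dCh_apply]
    show c (z.1, -1) - c (z.1, -1) = 0
    ring
  have h2 : (α : X.Co n) (c - X.hmap n (X.dCh n c)) = 0 := X.sker_co_kills α.2 hdiff
  rw [map_sub] at h2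
  linarith

/-- `γ_s` is a chain homomorphism. -/
lemma gam_comm [NeZero p] (hp1 : 1 < p) (n : ℕ) (α : ↥((X.sCo n).ker))
    (β : ↥((X.sCo (n + 1)).ker)) (hβ : (β : X.Co (n + 1)) = X.cb n (α : X.Co n)) :
    X.gam (n + 1) β = (X.gam n α).comp (X.bdS n) := by
  ext x
  rw [AddMonoidHom.comp_apply, X.gam_apply, X.gam_apply, hβ]
  show (α : X.Co n) (X.bd n (X.hmap (n + 1) (x : X.Ch (n + 1)))) =
    (α : X.Co n) (X.hmap n ((X.bdS n x : X.Ch n)))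
  have hbdS : (X.bdS n x : X.Ch n) = X.bd n (x : X.Ch (n + 1)) := rfl
  rw [hbdS]
  have hbx : X.bd n (x : X.Ch (n + 1)) ∈ (X.sCh n).ker := by
    rw [AddMonoidHom.mem_ker, ← X.bd_sCh, AddMonoidHom.mem_ker.1 x.2, map_zero]
  have hdu : X.dCh n (X.bd n (X.hmap (n + 1) (x : X.Ch (n + 1))) -
      X.hmap n (X.bd n (x : X.Ch (n + 1)))) = 0 := by
    rw [map_sub, ← X.bd_dCh, X.dCh_hmap hp1 x.2, X.dCh_hmap hp1 hbx, sub_self]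
  have h2 := X.sker_co_kills α.2 hdu
  rw [map_sub] at h2
  linarith

/-- two cochains agreeing on `ker s` have the same `d`. -/
lemma dCo_congr [NeZero p] {n : ℕ} {φ₁ φ₂ : X.Co n}
    (h : ∀ x : ↥((X.sCh n).ker), φ₁ (x : X.Ch n) = φ₂ (x : X.Ch n)) :
    X.dCo n φ₁ = X.dCo n φ₂ := by
  ext c
  show φ₁ (X.dCh n c) = φ₂ (X.dCh n c)
  exact h ⟨X.dCh n c, X.dCh_mem_sker n c⟩

/-- `ρ_s` is a chain homomorphism. -/
lemma rho_comm [NeZero p] (n : ℕ) (f : X.Co' n) :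
    ((X.rho (n + 1) (X.cb' n f) : X.Co (n + 1)) = X.cb n (X.rho n f : X.Co n)) := by
  rw [X.rho_coe, X.rho_coe, cb_dCo]
  apply X.dCo_congr
  intro x
  show X.cb' n f (X.rres (n + 1) (x : X.Ch (n + 1))) = X.psiOf n f (X.bd n (x : X.Ch (n + 1)))
  rw [X.rres_of_mem x.2]
  have hbx : X.bd n (x : X.Ch (n + 1)) ∈ (X.sCh n).ker := by
    rw [AddMonoidHom.mem_ker, ← X.bd_sCh, AddMonoidHom.mem_ker.1 x.2, map_zero]
  show f (X.bdS n x) = f (X.rres n (X.bd n (x : X.Ch (n + 1))))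
  rw [X.rres_of_mem hbx]
  congr 1

end ZpFreeComplex
namespace ZpFreeComplex

variable {p : ℕ} (X : ZpFreeComplex p)

lemma cb_mem_sker [NeZero p] {n : ℕ} {α : X.Co n} (hα : α ∈ (X.sCo n).ker) :
    X.cb n α ∈ (X.sCo (n + 1)).ker := by
  rw [AddMonoidHom.mem_ker, ← cb_sCo, AddMonoidHom.mem_ker.1 hα, map_zero]

lemma gam_cocycle [NeZero p] (hp1 : 1 < p) (n : ℕ) (α : X.Co n)
    (hαs : α ∈ (X.sCo n).ker) (hαc : X.cb n α = 0) :
    X.cb' n (X.gam n ⟨α, hαs⟩) = 0 := by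
  have h1 : X.cb' n (X.gam n ⟨α, hαs⟩) = (X.gam n ⟨α, hαs⟩).comp (X.bdS n) := rfl
  have h2 := X.gam_comm hp1 n ⟨α, hαs⟩ ⟨X.cb n α, X.cb_mem_sker hαs⟩ rfl
  rw [h1, ← h2]
  have h3 : (⟨X.cb n α, X.cb_mem_sker hαs⟩ : ↥((X.sCo (n + 1)).ker)) = 0 :=
    Subtype.ext hαc
  rw [h3, map_zero]

/-- `γ_s` restricted to cocycles. -/
def gamZ [NeZero p] (hp1 : 1 < p) (n : ℕ) : ↥(X.scocycles n) →+ ↥(X.cocycles' n) where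
  toFun α := ⟨X.gam n ⟨(α : X.Co n), α.2.1⟩,
    X.gam_cocycle hp1 n (α : X.Co n) α.2.1 (AddMonoidHom.mem_ker.1 α.2.2)⟩
  map_zero' := by
    apply Subtype.ext
    show X.gam n ⟨(0 : X.Co n), _⟩ = 0
    have : (⟨(0 : X.Co n), _⟩ : ↥((X.sCo n).ker)) = 0 := Subtype.ext rfl
    rw [this, map_zero]
  map_add' a b := by
    apply Subtype.ext
    show X.gam n ⟨(a : X.Co n) + (b : X.Co n), _⟩ = X.gam n ⟨(a : X.Co n), _⟩ + X.gam n ⟨(b : X.Co n), _⟩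
    rw [← map_add]
    rfl

/-- `ρ_s` restricted to cocycles. -/
def rhoZ [NeZero p] (n : ℕ) : ↥(X.cocycles' n) →+ ↥(X.scocycles n) where
  toFun g := ⟨(X.rho n (g : X.Co' n) : X.Co n), (X.rho n (g : X.Co' n)).2, by
    show X.cb n (X.rho n (g : X.Co' n) : X.Co n) = 0
    rw [← X.rho_comm n (g : X.Co' n)]
    have hg : X.cb' n (g : X.Co' n) = 0 := AddMonoidHom.mem_ker.1 g.2
    rw [hg, map_zero]
    rfl⟩
  map_zero' := by
    apply Subtype.ext
    show ((X.rho n (0 : X.Co' n)) : X.Co n) = 0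
    rw [map_zero]
    rfl
  map_add' a b := by
    apply Subtype.ext
    show ((X.rho n ((a : X.Co' n) + (b : X.Co' n))) : X.Co n) = _
    rw [map_add]
    rfl

end ZpFreeComplex
namespace ZpFreeComplex

variable {p : ℕ} (X : ZpFreeComplex p)

lemma condG [NeZero p] (hp1 : 1 < p) (n : ℕ) :
    (X.scobds n).addSubgroupOf (X.scocycles n) ≤
      ((X.cobds' n).addSubgroupOf (X.cocycles' n)).comap (X.gamZ hp1 n) := by
  intro α hα
  rw [AddSubgroup.mem_addSubgroupOf] at hα
  rw [AddSubgroup.mem_comap, AddSubgroup.mem_addSubgroupOf]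
  match n, α, hα with
  | 0, α, hα =>
      have h0 : (α : X.Co 0) = 0 := hα
      have hz : α = 0 := Subtype.ext h0
      rw [hz, map_zero]
      exact (X.cobds' 0).zero_mem
  | (j + 1), α, hα =>
      obtain ⟨φ, hφ, hcb⟩ := hα
      have hβ : ((⟨(α : X.Co (j + 1)), α.2.1⟩ : ↥((X.sCo (j + 1)).ker)) : X.Co (j + 1)) =
          X.cb j (((⟨φ, hφ⟩ : ↥((X.sCo j).ker))) : X.Co j) := hcb.symm
      have h1 := X.gam_comm hp1 j ⟨φ, hφ⟩ ⟨(α : X.Co (j + 1)), α.2.1⟩ hβ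
      show (X.gamZ hp1 (j + 1) α : X.Co' (j + 1)) ∈ X.cobds' (j + 1)
      have h2 : (X.gamZ hp1 (j + 1) α : X.Co' (j + 1)) =
          X.gam (j + 1) ⟨(α : X.Co (j + 1)), α.2.1⟩ := rfl
      rw [h2, h1]
      exact ⟨X.gam j ⟨φ, hφ⟩, rfl⟩

lemma condR [NeZero p] (n : ℕ) :
    (X.cobds' n).addSubgroupOf (X.cocycles' n) ≤
      ((X.scobds n).addSubgroupOf (X.scocycles n)).comap (X.rhoZ n) := by
  intro g hg
  rw [AddSubgroup.mem_addSubgroupOf] at hg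
  rw [AddSubgroup.mem_comap, AddSubgroup.mem_addSubgroupOf]
  match n, g, hg with
  | 0, g, hg =>
      have h0 : (g : X.Co' 0) = 0 := hg
      have hz : g = 0 := Subtype.ext h0
      rw [hz, map_zero]
      exact (X.scobds 0).zero_mem
  | (j + 1), g, hg =>
      obtain ⟨f, hf⟩ := hg
      show (X.rhoZ (j + 1) g : X.Co (j + 1)) ∈ X.scobds (j + 1)
      have h2 : (X.rhoZ (j + 1) g : X.Co (j + 1)) = (X.rho (j + 1) (g : X.Co' (j + 1)) : X.Co (j + 1)) := rfl
      rw [h2, ← hf, X.rho_comm j f]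
      exact ⟨(X.rho j f : X.Co j), (X.rho j f).2, rfl⟩

/-- the induced map on cohomology. -/
def gamH [NeZero p] (hp1 : 1 < p) (n : ℕ) : X.Hs n →+ X.H' n :=
  QuotientAddGroup.map _ _ (X.gamZ hp1 n) (X.condG hp1 n)

/-- the induced map on cohomology, other direction. -/
def rhoH [NeZero p] (hp1 : 1 < p) (n : ℕ) : X.H' n →+ X.Hs n :=
  QuotientAddGroup.map _ _ (X.rhoZ n) (X.condR n)

lemma rhoZ_gamZ [NeZero p] (hp1 : 1 < p) (n : ℕ) (α : ↥(X.scocycles n)) :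
    X.rhoZ n (X.gamZ hp1 n α) = α := by
  apply Subtype.ext
  show (X.rho n (X.gam n ⟨(α : X.Co n), α.2.1⟩) : X.Co n) = (α : X.Co n)
  rw [X.rho_gam hp1]

lemma gamZ_rhoZ [NeZero p] (hp1 : 1 < p) (n : ℕ) (g : ↥(X.cocycles' n)) :
    X.gamZ hp1 n (X.rhoZ n g) = g := by
  apply Subtype.ext
  show X.gam n ⟨(X.rho n (g : X.Co' n) : X.Co n), _⟩ = (g : X.Co' n)
  have h1 : (⟨(X.rho n (g : X.Co' n) : X.Co n), (X.rhoZ n g).2.1⟩ : ↥((X.sCo n).ker)) =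
      X.rho n (g : X.Co' n) := Subtype.ext rfl
  rw [h1, X.gam_rho hp1]

/-- the induced isomorphism on cohomology. -/
def GamEquiv [NeZero p] (hp1 : 1 < p) (n : ℕ) : X.Hs n ≃+ X.H' n where
  toFun := X.gamH hp1 n
  invFun := X.rhoH hp1 n
  left_inv := by
    intro q
    refine QuotientAddGroup.induction_on q (fun α => ?_)
    show X.rhoH hp1 n (X.gamH hp1 n (QuotientAddGroup.mk α)) = _
    rw [gamH, rhoH, QuotientAddGroup.map_mk, QuotientAddGroup.map_mk, X.rhoZ_gamZ hp1]
  right_inv := by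
    intro q
    refine QuotientAddGroup.induction_on q (fun g => ?_)
    show X.gamH hp1 n (X.rhoH hp1 n (QuotientAddGroup.mk g)) = _
    rw [gamH, rhoH, QuotientAddGroup.map_mk, QuotientAddGroup.map_mk, X.gamZ_rhoZ hp1]
  map_add' := map_add _

end ZpFreeComplex

open ZpFreeComplex

/-- **`γ_s` and `ρ_s` identify `H*_s(C)` with the cohomology of `Hom(C^s, ℤ)`.**
Let `C` be a `ℤ_p`-chain complex each of whose chain groups is a finitely generated free
`ℤ[ℤ/pℤ]`-module with the generator acting as `t` (modelled as `F n × ZMod p → ℤ` with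
`t` cyclically shifting the second coordinate).  Give `Hom(C^s, ℤ)` the coboundary dual
to the restricted boundary of `C^s = ker s`.  Then: (i) every functional on `C^s_n` is
the restriction of a cochain `ψ ∈ C^n`; (ii) `γ_s : C*_s → Hom(C^s, ℤ)`,
`γ_s(dψ) = ψ|_{C^s}`, is well-defined and a chain homomorphism; (iii)
`ρ_s : Hom(C^s, ℤ) → C*_s`, `ρ_s(ψ|_{C^s}) = dψ`, is well-defined and a chain
homomorphism; (iv) `γ_s` and `ρ_s` induce mutually inverse isomorphisms between
`H^n_s(C)` and the `n`-th cohomology of `Hom(C^s, ℤ)`, for every `n`. -/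
theorem gamma_s_rho_s_induce_inverse_isomorphisms
    (p : ℕ) (hp : p.Prime) (X : ZpFreeComplex p) :
    (∀ n (f : X.Co' n), ∃ ψ : X.Co n, ∀ x : ↥((X.sCh n).ker), f x = ψ (x : X.Ch n))
    ∧ ∃ (γ : ∀ n, ↥((X.sCo n).ker) →+ X.Co' n)
        (ρ : ∀ n, X.Co' n →+ ↥((X.sCo n).ker))
        (Γ : ∀ n, X.Hs n ≃+ X.H' n),
        -- (ii) γ_s is given by γ_s(dψ) = ψ|_{C^s} ...
        (∀ n (ψ : X.Co n) (hψ : X.dCo n ψ ∈ (X.sCo n).ker) (x : ↥((X.sCh n).ker)),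
            γ n ⟨X.dCo n ψ, hψ⟩ x = ψ (x : X.Ch n))
        -- ... and is a chain homomorphism:
        ∧ (∀ n (α : ↥((X.sCo n).ker)) (β : ↥((X.sCo (n + 1)).ker)),
            (β : X.Co (n + 1)) = X.cb n (α : X.Co n) →
            γ (n + 1) β = (γ n α).comp (X.bdS n))
        -- (iii) ρ_s is given by ρ_s(ψ|_{C^s}) = dψ ...
        ∧ (∀ n (ψ : X.Co n) (f : X.Co' n),
            (∀ x : ↥((X.sCh n).ker), f x = ψ (x : X.Ch n)) →
            ((ρ n f : X.Co n) = X.dCo n ψ))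
        -- ... and is a chain homomorphism:
        ∧ (∀ n (f : X.Co' n),
            ((ρ (n + 1) (X.cb' n f) : X.Co (n + 1)) = X.cb n (ρ n f : X.Co n)))
        -- (iv) γ_s and ρ_s induce mutually inverse isomorphisms on cohomology:
        ∧ (∀ n (α : ↥(X.scocycles n)) (hα : (α : X.Co n) ∈ (X.sCo n).ker)
             (g : ↥(X.cocycles' n)),
            (g : X.Co' n) = γ n ⟨(α : X.Co n), hα⟩ →
            Γ n (QuotientAddGroup.mk α) = QuotientAddGroup.mk g)
        ∧ (∀ n (g : ↥(X.cocycles' n)) (α : ↥(X.scocycles n)),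
            (α : X.Co n) = (ρ n (g : X.Co' n) : X.Co n) →
            (Γ n).symm (QuotientAddGroup.mk g) = QuotientAddGroup.mk α) := by
  haveI : NeZero p := ⟨hp.pos.ne'⟩
  have hp1 : 1 < p := hp.one_lt
  constructor
  · -- (i) every functional on `C^s_n` extends to a cochain
    intro n f
    refine ⟨X.psiOf n f, fun x => ?_⟩
    show f x = f (X.rres n (x : X.Ch n))
    rw [X.rres_of_mem x.2]
  · refine ⟨X.gam, fun n => X.rho n, X.GamEquiv hp1, ?_, ?_, ?_, ?_, ?_, ?_⟩
    · -- (ii) γ_s (dψ) = ψ|_{C^s}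
      intro n ψ hψ x
      rw [X.gam_apply]
      show ψ (X.dCh n (X.hmap n (x : X.Ch n))) = ψ (x : X.Ch n)
      rw [X.dCh_hmap hp1 x.2]
    · -- (ii) γ_s is a chain homomorphism
      intro n α β h
      exact X.gam_comm hp1 n α β h
    · -- (iii) ρ_s (ψ|_{C^s}) = dψ
      intro n ψ f hf
      rw [X.rho_coe]
      apply X.dCo_congr
      intro x
      show f (X.rres n (x : X.Ch n)) = ψ (x : X.Ch n)
      rw [X.rres_of_mem x.2]
      exact hf x
    · -- (iii) ρ_s is a chain homomorphism
      intro n f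
      exact X.rho_comm n f
    · -- (iv) Γ is induced by γ_s
      intro n α hα g hg
      show X.gamH hp1 n (QuotientAddGroup.mk α) = QuotientAddGroup.mk g
      rw [gamH, QuotientAddGroup.map_mk]
      congr 1
      apply Subtype.ext
      rw [hg]
      rfl
    · -- (iv) Γ⁻¹ is induced by ρ_s
      intro n g α hα
      show X.rhoH hp1 n (QuotientAddGroup.mk g) = QuotientAddGroup.mk α
      rw [rhoH, QuotientAddGroup.map_mk]
      congr 1
      apply Subtype.ext
      rw [hα]
      rfl
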